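/- Let n ≥ 2 and fix i ≠ j with 1 ≤ i, j ≤ n. Let w be the permutation of {1,…,n} with w(i) = 1, w(j) = n, and whose values at the remaining positions, read in increasing order of position, are n−1, n−2, …, 2 in decreasing order. Then ℓ(w) = n(n−1)/2 − (j−1+n−i) if j < i, and ℓ(w) = n(n−1)/2 − (j−2+n−i) if j > i. -/

import Mathlib

open Matrix

noncomputable section

/-- The length of a permutation: its number of inversions. -/
def invLen {n : ℕ} (w : Equiv.Perm (Fin n)) : ℕ :=
  (Finset.univ.filter (fun p : Fin n × Fin n => p.1 < p.2 ∧ w p.2 < w p.1)).card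

def IsTransposition {n : ℕ} (t : Equiv.Perm (Fin n)) : Prop :=
  ∃ a b : Fin n, a ≠ b ∧ t = Equiv.swap a b

/-- `BruhatCovers w v` means `w` covers `v` in the Bruhat order:
`v = w·t` for some transposition `t` and `ℓ(v) = ℓ(w) − 1`. -/
def BruhatCovers {n : ℕ} (w v : Equiv.Perm (Fin n)) : Prop :=
  (∃ t, IsTransposition t ∧ v = w * t) ∧ invLen v + 1 = invLen w

/-- The Bruhat order: reflexive–transitive closure of the covering relation. -/
def BruhatLE {n : ℕ} (v w : Equiv.Perm (Fin n)) : Prop :=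
  Relation.ReflTransGen (fun x y => BruhatCovers y x) v w

def BruhatLT {n : ℕ} (v w : Equiv.Perm (Fin n)) : Prop :=
  BruhatLE v w ∧ v ≠ w

/-- The matrix unit `E_{kl}`. -/
def stdE (n : ℕ) (k l : Fin n) : Matrix (Fin n) (Fin n) ℂ := Matrix.single k l 1

/-- The permutation matrix of `σ`: entry `(k,l)` is `1` iff `k = σ(l)`. -/
def permMat {n : ℕ} (σ : Equiv.Perm (Fin n)) : Matrix (Fin n) (Fin n) ℂ :=
  Matrix.of fun k l => if k = σ l then 1 else 0

/-- The Hessenberg space of a (1-based) Hessenberg function `h`: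
matrices `M` with `M_{kl} = 0` whenever `k > h(l)`.  Row index `k : Fin n`
corresponds to the 1-based row `(k : ℕ) + 1`. -/
def HessSpace {n : ℕ} (h : Fin n → ℕ) : Set (Matrix (Fin n) (Fin n) ℂ) :=
  {M | ∀ k l : Fin n, h l < (k : ℕ) + 1 → M k l = 0}

/-- The span `H_{ij}` of the matrix units `E_{kl}` with `k ≤ i` and `l ≥ j`
(`i`, `j`, `k`, `l` all 1-based): matrices vanishing outside the
upper-right `i × (n−j+1)` rectangle. -/
def Hrect (n i j : ℕ) : Set (Matrix (Fin n) (Fin n) ℂ) :=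
  {M | ∀ k l : Fin n, ¬((k : ℕ) + 1 ≤ i ∧ j ≤ (l : ℕ) + 1) → M k l = 0}

open Finset

/-- with `w` the permutation with `w(i)=1`, `w(j)=n` and remaining
values `n−1,…,2` in decreasing order:
`ℓ(w) = n(n−1)/2 − (j−1+n−i)` if `j < i`, and
`ℓ(w) = n(n−1)/2 − (j−2+n−i)` if `j > i`. -/
theorem stmt9 (n : ℕ) (hn : 2 ≤ n) (i j : ℕ) (hi1 : 1 ≤ i) (hin : i ≤ n)
    (hj1 : 1 ≤ j) (hjn : j ≤ n) (hij : i ≠ j) (w : Equiv.Perm (Fin n))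
    (hwi : w ⟨i - 1, by omega⟩ = ⟨0, by omega⟩)
    (hwj : w ⟨j - 1, by omega⟩ = ⟨n - 1, by omega⟩)
    (hdec : ∀ p q : Fin n, p ≠ ⟨i - 1, by omega⟩ → p ≠ ⟨j - 1, by omega⟩ →
      q ≠ ⟨i - 1, by omega⟩ → q ≠ ⟨j - 1, by omega⟩ → p < q → w q < w p) :
    (j < i → invLen w = n * (n - 1) / 2 - (j - 1 + n - i)) ∧
    (i < j → invLen w = n * (n - 1) / 2 - (j - 2 + n - i)) := by
  have hi' : i - 1 < n := by omega
  have hj' : j - 1 < n := by omega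
  have hwi' : w ⟨i - 1, hi'⟩ = ⟨0, by omega⟩ := hwi
  have hwj' : w ⟨j - 1, hj'⟩ = ⟨n - 1, by omega⟩ := hwj
  have hdec' : ∀ p q : Fin n, p ≠ ⟨i - 1, hi'⟩ → p ≠ ⟨j - 1, hj'⟩ →
      q ≠ ⟨i - 1, hi'⟩ → q ≠ ⟨j - 1, hj'⟩ → p < q → w q < w p := hdec
  clear hwi hwj hdec
  have hkey : ∀ p q : Fin n, p < q →
      (w p < w q ↔ p = ⟨i - 1, hi'⟩ ∨ q = ⟨j - 1, hj'⟩) := by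
    intro p q hpq
    constructor
    · intro h
      by_contra hc
      push_neg at hc
      obtain ⟨hpI, hqJ⟩ := hc
      have hqp : w q < w p := by
        by_cases hpJ : p = ⟨j - 1, hj'⟩
        · have hv : (w p).val = n - 1 := by rw [hpJ, hwj']
          have hne : w q ≠ w p := w.injective.ne hpq.ne'
          have := (w q).isLt
          rw [Fin.lt_def]
          simp only [Ne, Fin.ext_iff] at hne
          omega
        · by_cases hqI : q = ⟨i - 1, hi'⟩
          · have hv : (w q).val = 0 := by rw [hqI, hwi']
            have hne : w p ≠ w q := w.injective.ne hpq.ne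
            rw [Fin.lt_def]
            simp only [Ne, Fin.ext_iff] at hne
            omega
          · exact hdec' p q hpI hpJ hqI hqJ hpq
      exact absurd h (asymm hqp)
    · rintro (hpI | hqJ)
      · have hv : (w p).val = 0 := by rw [hpI, hwi']
        have hne : w q ≠ w p := w.injective.ne hpq.ne'
        rw [Fin.lt_def]
        simp only [Ne, Fin.ext_iff] at hne
        omega
      · have hv : (w q).val = n - 1 := by rw [hqJ, hwj']
        have hne : w p ≠ w q := w.injective.ne hpq.ne
        have := (w p).isLt
        rw [Fin.lt_def]
        simp only [Ne, Fin.ext_iff] at hne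
        omega
  -- total number of pairs
  have hT : (univ.filter (fun p : Fin n × Fin n => p.1 < p.2)).card = n * (n - 1) / 2 := by
    rw [Finset.card_eq_sum_card_fiberwise (f := fun p => p.2) (t := univ) (fun x _ => mem_univ _)]
    have h1 : ∀ q : Fin n, ((univ.filter (fun p : Fin n × Fin n => p.1 < p.2)).filter
        (fun p => p.2 = q)).card = (q : ℕ) := by
      intro q
      have : ((univ.filter (fun p : Fin n × Fin n => p.1 < p.2)).filter (fun p => p.2 = q))
          = Iio q ×ˢ {q} := by
        ext ⟨a, b⟩
        simp only [mem_filter, mem_univ, true_and, mem_product, mem_Iio, mem_singleton]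
        constructor
        · rintro ⟨h1, rfl⟩; exact ⟨h1, rfl⟩
        · rintro ⟨h1, rfl⟩; exact ⟨h1, rfl⟩
      rw [this, card_product, card_singleton, Fin.card_Iio, mul_one]
    simp only [h1]
    rw [Fin.sum_univ_eq_sum_range (fun k => k) n, Finset.sum_range_id]
  -- split into inversions and non-inversions
  have hsplit : invLen w +
      (univ.filter (fun p : Fin n × Fin n => p.1 < p.2 ∧ w p.1 < w p.2)).card
      = n * (n - 1) / 2 := by
    rw [← hT, ← Finset.card_filter_add_card_filter_not
      (s := univ.filter (fun p : Fin n × Fin n => p.1 < p.2))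
      (p := fun p => w p.2 < w p.1)]
    congr 1
    · unfold invLen
      rw [Finset.filter_filter]
    · rw [Finset.filter_filter]
      congr 1
      apply Finset.filter_congr
      intro p _
      simp only [not_lt]
      constructor
      · rintro ⟨h1, h2⟩
        exact ⟨h1, h2.le⟩
      · rintro ⟨h1, h2⟩
        exact ⟨h1, lt_of_le_of_ne h2 (w.injective.ne h1.ne)⟩
  -- identify the non-inversion set
  have hNeq : (univ.filter (fun p : Fin n × Fin n => p.1 < p.2 ∧ w p.1 < w p.2))
      = ({(⟨i - 1, hi'⟩ : Fin n)} ×ˢ Ioi (⟨i - 1, hi'⟩ : Fin n)) ∪ (Iio (⟨j - 1, hj'⟩ : Fin n) ×ˢ {(⟨j - 1, hj'⟩ : Fin n)}) := by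
    ext ⟨p, q⟩
    simp only [mem_filter, mem_univ, true_and, mem_union, mem_product, mem_Ioi, mem_Iio,
      mem_singleton]
    constructor
    · rintro ⟨hpq, hlt⟩
      rcases (hkey p q hpq).1 hlt with h | h
      · exact Or.inl ⟨h, h ▸ hpq⟩
      · exact Or.inr ⟨h ▸ hpq, h⟩
    · rintro (⟨rfl, h⟩ | ⟨h, rfl⟩)
      · exact ⟨h, (hkey _ _ h).2 (Or.inl rfl)⟩
      · exact ⟨h, (hkey _ _ h).2 (Or.inr rfl)⟩
  have cA : ({(⟨i - 1, hi'⟩ : Fin n)} ×ˢ Ioi (⟨i - 1, hi'⟩ : Fin n)).card = n - i := by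
    rw [card_product, card_singleton, Fin.card_Ioi, one_mul]
    simp only []
    omega
  have cB : (Iio (⟨j - 1, hj'⟩ : Fin n) ×ˢ {(⟨j - 1, hj'⟩ : Fin n)}).card = j - 1 := by
    rw [card_product, card_singleton, Fin.card_Iio, mul_one]
  constructor
  · intro hji
    have hdisj : Disjoint ({(⟨i - 1, hi'⟩ : Fin n)} ×ˢ Ioi (⟨i - 1, hi'⟩ : Fin n))
        (Iio (⟨j - 1, hj'⟩ : Fin n) ×ˢ {(⟨j - 1, hj'⟩ : Fin n)}) := by
      rw [Finset.disjoint_left]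
      rintro ⟨p, q⟩ h1 h2
      simp only [mem_product, mem_singleton, mem_Ioi, mem_Iio] at h1 h2
      obtain ⟨rfl, hq⟩ := h1
      obtain ⟨hp, rfl⟩ := h2
      rw [Fin.lt_def] at hp hq
      simp only at hp hq
      omega
    have hNcard : (univ.filter (fun p : Fin n × Fin n => p.1 < p.2 ∧ w p.1 < w p.2)).card
        = (n - i) + (j - 1) := by
      rw [hNeq, Finset.card_union_of_disjoint hdisj, cA, cB]
    rw [hNcard] at hsplit
    omega
  · intro hij'
    have hinter : ({(⟨i - 1, hi'⟩ : Fin n)} ×ˢ Ioi (⟨i - 1, hi'⟩ : Fin n)) ∩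
        (Iio (⟨j - 1, hj'⟩ : Fin n) ×ˢ {(⟨j - 1, hj'⟩ : Fin n)})
        = {((⟨i - 1, hi'⟩ : Fin n), (⟨j - 1, hj'⟩ : Fin n))} := by
      ext ⟨p, q⟩
      simp only [mem_inter, mem_product, mem_singleton, mem_Ioi, mem_Iio, Prod.mk.injEq,
        Prod.ext_iff]
      constructor
      · rintro ⟨⟨rfl, hq⟩, hp, rfl⟩
        exact ⟨rfl, rfl⟩
      · rintro ⟨rfl, rfl⟩
        refine ⟨⟨rfl, ?_⟩, ?_, rfl⟩ <;> rw [Fin.lt_def] <;> simp <;> omega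
    have hNcard : (univ.filter (fun p : Fin n × Fin n => p.1 < p.2 ∧ w p.1 < w p.2)).card
        = (n - i) + (j - 1) - 1 := by
      have := Finset.card_union_add_card_inter
        ({(⟨i - 1, hi'⟩ : Fin n)} ×ˢ Ioi (⟨i - 1, hi'⟩ : Fin n))
        (Iio (⟨j - 1, hj'⟩ : Fin n) ×ˢ {(⟨j - 1, hj'⟩ : Fin n)})
      rw [hinter, card_singleton, cA, cB] at this
      rw [hNeq]
      omega
    rw [hNcard] at hsplit
    omega
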